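/- arXiv:1304.4290 — 5 statements merged into one kernel-verified Lean document; each statement's English description precedes it below -/
import Mathlib

section
/- Let S be a numerical semigroup minimally generated by g_1 < ... < g_ν. If s ⪯ t in S and t has a unique representation as a nonnegative integer combination of the minimal generators, then s has a unique representation, and moreover ord(s) + ord(t - s) = ord(t), where ord denotes the maximal total coefficient sum over all representations. -/
/-- A numerical semigroup: a subset of ℕ containing 0, closed under addition,
with finite complement. -/
structure NumSgp where
  carrier : Set ℕ
  zero_mem : 0 ∈ carrier
  add_mem : ∀ a ∈ carrier, ∀ b ∈ carrier, a + b ∈ carrier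
  cofinite : Set.Finite carrierᶜ

namespace NumSgp

/-- The multiplicity: the smallest positive element. -/
noncomputable def mult (S : NumSgp) : ℕ := sInf {s | s ∈ S.carrier ∧ s ≠ 0}

/-- The Apéry set of `S` with respect to `n`: elements `s ∈ S` with `s - n ∉ S`. -/
def Apery (S : NumSgp) (n : ℕ) : Set ℕ :=
  {s | s ∈ S.carrier ∧ ¬ ∃ t ∈ S.carrier, s = t + n}

/-- `s ⪯ t` : there is `u ∈ S` with `t = s + u`. -/
def sle (S : NumSgp) (s t : ℕ) : Prop := ∃ u ∈ S.carrier, t = s + u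

/-- Membership for integers. -/
def memZ (S : NumSgp) (x : ℤ) : Prop := ∃ n ∈ S.carrier, (n : ℤ) = x

/-- `f` is the Frobenius number of `S`: the largest integer not in `S`. -/
def IsFrob (S : NumSgp) (f : ℤ) : Prop := ¬ S.memZ f ∧ ∀ x : ℤ, f < x → S.memZ x

/-- `S` is symmetric: `x ∈ S ↔ f - x ∉ S` for all integers `x`. -/
def Symm (S : NumSgp) : Prop :=
  ∃ f : ℤ, S.IsFrob f ∧ ∀ x : ℤ, S.memZ x ↔ ¬ S.memZ (f - x)

/-- `s` is a minimal generator (irreducible element) of `S`. -/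
def IsMinGen (S : NumSgp) (s : ℕ) : Prop :=
  s ∈ S.carrier ∧ s ≠ 0 ∧
    ¬ ∃ a ∈ S.carrier, ∃ b ∈ S.carrier, a ≠ 0 ∧ b ≠ 0 ∧ s = a + b

/-- `g : Fin ν → ℕ` enumerates the minimal generators in increasing order. -/
def MinGens (S : NumSgp) {ν : ℕ} (g : Fin ν → ℕ) : Prop :=
  StrictMono g ∧ Set.range g = {s | S.IsMinGen s}

/-- The order of `s`: the maximal total coefficient sum over representations of `s`
in terms of the generators `g`. -/
noncomputable def ord {ν : ℕ} (g : Fin ν → ℕ) (s : ℕ) : ℕ :=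
  sSup {k | ∃ lam : Fin ν → ℕ, s = ∑ i, lam i * g i ∧ k = ∑ i, lam i}

/-- `s` has a unique representation in terms of the generators `g`. -/
def UniqueRep {ν : ℕ} (g : Fin ν → ℕ) (s : ℕ) : Prop :=
  ∃! lam : Fin ν → ℕ, s = ∑ i, lam i * g i

/-- `s` has a unique maximal representation in terms of the generators `g`. -/
def UniqueMaxRep {ν : ℕ} (g : Fin ν → ℕ) (s : ℕ) : Prop :=
  ∃! lam : Fin ν → ℕ, s = ∑ i, lam i * g i ∧ ∑ i, lam i = ord g s

/-- The submonoid of ℕ generated by the generators `g j` with `j < i`. -/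
def genBy {ν : ℕ} (g : Fin ν → ℕ) (i : Fin ν) : Set ℕ :=
  {s | ∃ lam : Fin ν → ℕ, (∀ j, ¬ j < i → lam j = 0) ∧ s = ∑ j, lam j * g j}

/-- `τ_i = min {h | h·g_i ∈ ⟨g_1, …, g_{i-1}⟩} - 1`. -/
noncomputable def tau {ν : ℕ} (g : Fin ν → ℕ) (i : Fin ν) : ℕ :=
  sInf {h | h * g i ∈ genBy g i} - 1

/-- `α_i = max {h | h·g_i ∈ Ap(S, m)}`. -/
noncomputable def alpha (S : NumSgp) {ν : ℕ} (g : Fin ν → ℕ) (i : Fin ν) : ℕ :=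
  sSup {h | h * g i ∈ S.Apery S.mult}

/-- `β_i = max {h | h·g_i ∈ Ap(S, m) and ord(h·g_i) = h}`. -/
noncomputable def beta (S : NumSgp) {ν : ℕ} (g : Fin ν → ℕ) (i : Fin ν) : ℕ :=
  sSup {h | h * g i ∈ S.Apery S.mult ∧ ord g (h * g i) = h}

/-- `γ_i`. -/
noncomputable def gamma (S : NumSgp) {ν : ℕ} (g : Fin ν → ℕ) (i : Fin ν) : ℕ :=
  sSup {h | h * g i ∈ S.Apery S.mult ∧ ord g (h * g i) = h ∧ UniqueMaxRep g (h * g i)}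

/-- The "rectangle" `{Σ_{i ≥ 2} λ_i g_i | 0 ≤ λ_i ≤ c_i}` (indices here start at 0,
the first generator does not appear). -/
def rect {ν : ℕ} (g c : Fin ν → ℕ) : Set ℕ :=
  {s | ∃ lam : Fin ν → ℕ, (∀ i, i.val = 0 → lam i = 0) ∧ (∀ i, lam i ≤ c i) ∧
    s = ∑ i, lam i * g i}

/-- `Π_{i ≥ 2} (c_i + 1)` (the first index excluded). -/
def piProd {ν : ℕ} (c : Fin ν → ℕ) : ℕ :=
  ∏ i ∈ Finset.univ.filter (fun i : Fin ν => i.val ≠ 0), (c i + 1)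

/-- `S` is telescopic. -/
def Telescopic (S : NumSgp) : Prop :=
  ∃ (ν : ℕ) (g : Fin ν → ℕ), S.MinGens g ∧ S.Apery S.mult = rect g (tau g)

/-- `S` has α-rectangular Apéry set. -/
def AlphaRect (S : NumSgp) : Prop :=
  ∃ (ν : ℕ) (g : Fin ν → ℕ), S.MinGens g ∧ S.Apery S.mult = rect g (S.alpha g)

/-- `S` has γ-rectangular Apéry set. -/
def GammaRect (S : NumSgp) : Prop :=
  ∃ (ν : ℕ) (g : Fin ν → ℕ), S.MinGens g ∧ S.Apery S.mult = rect g (S.gamma g)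

/-- `S` is associated to a plane branch: telescopic and `(τ_i+1) g_i < g_{i+1}`. -/
def PlaneBranch (S : NumSgp) : Prop :=
  ∃ (ν : ℕ) (g : Fin ν → ℕ), S.MinGens g ∧ S.Apery S.mult = rect g (tau g) ∧
    ∀ i : Fin ν, 1 ≤ i.val → ∀ h : i.val + 1 < ν, (tau g i + 1) * g i < g ⟨i.val + 1, h⟩

/-- `S` is free: for some rearrangement `n` of the minimal generators,
`Ap(S, n_1) = {Σ_{i ≥ 2} λ_i n_i | 0 ≤ λ_i ≤ φ_i}`. -/
def Free (S : NumSgp) : Prop :=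
  ∃ (ν : ℕ) (hν : 0 < ν) (n : Fin ν → ℕ), Function.Injective n ∧
    Set.range n = {s | S.IsMinGen s} ∧ S.Apery (n ⟨0, hν⟩) = rect n (tau n)

/-- The kernel congruence of the factorization map `λ ↦ Σ λ_i g_i`. -/
def kerCon {ν : ℕ} (g : Fin ν → ℕ) : AddCon (Fin ν → ℕ) where
  r a b := ∑ i, a i * g i = ∑ i, b i * g i
  iseqv := ⟨fun _ => rfl, Eq.symm, Eq.trans⟩
  add' := by
    intro a b c d h1 h2
    simp only [Pi.add_apply, add_mul, Finset.sum_add_distrib]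
    exact congrArg₂ (· + ·) h1 h2

/-- `S` is a complete intersection: it admits a presentation of cardinality `ν - 1`
(the cardinality of any minimal presentation equals `ν - 1`). -/
def CompleteIntersection (S : NumSgp) : Prop :=
  ∃ (ν : ℕ) (g : Fin ν → ℕ), S.MinGens g ∧
    ∃ ρ : Finset ((Fin ν → ℕ) × (Fin ν → ℕ)), ρ.card = ν - 1 ∧
      addConGen (fun a b => (a, b) ∈ ρ) = kerCon g

end NumSgp

open NumSgp

lemma rep_exists {ν : ℕ} (S : NumSgp) (g : Fin ν → ℕ) (hg : S.MinGens g) :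
    ∀ s ∈ S.carrier, ∃ lam : Fin ν → ℕ, s = ∑ i, lam i * g i := by
  intro s
  induction s using Nat.strong_induction_on with
  | _ s ih =>
    intro hs
    by_cases h0 : s = 0
    · exact ⟨0, by simp [h0]⟩
    by_cases hirr : ∃ a ∈ S.carrier, ∃ b ∈ S.carrier, a ≠ 0 ∧ b ≠ 0 ∧ s = a + b
    · obtain ⟨a, ha, b, hb, ha0, hb0, hab⟩ := hirr
      obtain ⟨la, hla⟩ := ih a (by omega) ha
      obtain ⟨lb, hlb⟩ := ih b (by omega) hb
      refine ⟨la + lb, ?_⟩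
      rw [hab, hla, hlb]
      simp [add_mul, Finset.sum_add_distrib]
    · have hmg : S.IsMinGen s := ⟨hs, h0, hirr⟩
      have : s ∈ Set.range g := by rw [hg.2]; exact hmg
      obtain ⟨i, hi⟩ := this
      refine ⟨fun j => if j = i then 1 else 0, ?_⟩
      simp [Finset.sum_ite_eq', hi]

lemma ord_of_unique {ν : ℕ} (g : Fin ν → ℕ) (s : ℕ) (lam : Fin ν → ℕ)
    (hrep : s = ∑ i, lam i * g i)
    (huniq : ∀ lam' : Fin ν → ℕ, s = ∑ i, lam' i * g i → lam' = lam) :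
    ord g s = ∑ i, lam i := by
  have hset : {k | ∃ lam' : Fin ν → ℕ, s = ∑ i, lam' i * g i ∧ k = ∑ i, lam' i}
      = {∑ i, lam i} := by
    ext k
    constructor
    · rintro ⟨lam', h1, h2⟩
      rw [huniq lam' h1] at h2
      exact h2
    · rintro rfl
      exact ⟨lam, hrep, rfl⟩
  rw [ord, hset, csSup_singleton]

/-- If `s ⪯ t` and `t` has a unique representation, then so does `s`,
and `ord(s) + ord(t - s) = ord(t)`. -/
theorem stmt_1 (S : NumSgp) (ν : ℕ) (g : Fin ν → ℕ) (hg : S.MinGens g)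
    (s t : ℕ) (hs : s ∈ S.carrier) (ht : t ∈ S.carrier) (hst : S.sle s t)
    (huniq : UniqueRep g t) :
    UniqueRep g s ∧ ord g s + ord g (t - s) = ord g t := by
  obtain ⟨lam_t, ht_rep, ht_uniq⟩ := huniq
  obtain ⟨u, hu, htu⟩ := hst
  have hts : t - s = u := by omega
  obtain ⟨ls, hls⟩ := rep_exists S g hg s hs
  obtain ⟨lu, hlu⟩ := rep_exists S g hg u hu
  have hsumrep : ∀ a b : Fin ν → ℕ, ∑ i, (a + b) i * g i = (∑ i, a i * g i) + ∑ i, b i * g i := by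
    intro a b
    simp [add_mul, Finset.sum_add_distrib]
  have key : ls + lu = lam_t := by
    apply ht_uniq
    rw [hsumrep, ← hls, ← hlu, htu]
  have hs_uniq : ∀ lam' : Fin ν → ℕ, s = ∑ i, lam' i * g i → lam' = ls := by
    intro lam' h1
    have : lam' + lu = lam_t := by
      apply ht_uniq
      rw [hsumrep, ← h1, ← hlu, htu]
    funext i
    have h2 : (lam' + lu) i = (ls + lu) i := by rw [this, key]
    simpa using h2
  have hu_uniq : ∀ lam' : Fin ν → ℕ, u = ∑ i, lam' i * g i → lam' = lu := by
    intro lam' h1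
    have : ls + lam' = lam_t := by
      apply ht_uniq
      rw [hsumrep, ← h1, ← hls, htu]
    funext i
    have h2 : (ls + lam') i = (ls + lu) i := by rw [this, key]
    simpa using h2
  have ht_uniq' : ∀ lam' : Fin ν → ℕ, t = ∑ i, lam' i * g i → lam' = lam_t := fun lam' h =>
    ht_uniq lam' h
  refine ⟨⟨ls, hls, hs_uniq⟩, ?_⟩
  rw [hts, ord_of_unique g s ls hls hs_uniq, ord_of_unique g u lu hlu hu_uniq,
    ord_of_unique g t lam_t ht_rep ht_uniq', ← key]
  simp [Finset.sum_add_distrib]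
end

section
/- Let S be a numerical semigroup with multiplicity m, minimally generated by g_1 < ... < g_ν, and for i ≥ 2 let α_i = max{h ∈ ℕ | h·g_i ∈ Ap(S,m)}. Then the Apéry set Ap(S,m) is contained in the set {Σ_{i=2}^{ν} λ_i g_i | 0 ≤ λ_i ≤ α_i}, and consequently m ≤ Π_{i=2}^{ν}(α_i + 1). -/
open NumSgp

namespace NumSgpAux

variable (S : NumSgp)

lemma exists_pos : ∃ s, s ∈ S.carrier ∧ s ≠ 0 := by
  have hinf : S.carrier.Infinite := by
    have := S.cofinite.infinite_compl
    rwa [compl_compl] at this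
  obtain ⟨s, hs, hs0⟩ := (hinf.diff (Set.finite_singleton 0)).nonempty
  exact ⟨s, hs, by simpa using hs0⟩

lemma mult_mem : S.mult ∈ S.carrier ∧ S.mult ≠ 0 :=
  Nat.sInf_mem (exists_pos S)

lemma mult_pos : 0 < S.mult := Nat.pos_of_ne_zero (mult_mem S).2

lemma mult_le {s : ℕ} (hs : s ∈ S.carrier) (h0 : s ≠ 0) : S.mult ≤ s :=
  Nat.sInf_le ⟨hs, h0⟩

lemma mul_mem (n : ℕ) {x : ℕ} (hx : x ∈ S.carrier) : n * x ∈ S.carrier := by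
  induction n with
  | zero => simpa using S.zero_mem
  | succ n ih => rw [Nat.succ_mul]; exact S.add_mem _ ih _ hx

lemma sum_mem {ι : Type*} (t : Finset ι) (f : ι → ℕ)
    (hf : ∀ i ∈ t, f i ∈ S.carrier) : (∑ i ∈ t, f i) ∈ S.carrier := by
  classical
  induction t using Finset.induction with
  | empty => simpa using S.zero_mem
  | @insert a s' hna ih =>
      rw [Finset.sum_insert hna]
      exact S.add_mem _ (hf a (Finset.mem_insert_self a s'))
        _ (ih fun i hi => hf i (Finset.mem_insert_of_mem hi))

variable {ν : ℕ} {g : Fin ν → ℕ}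

lemma g_mingen (hg : S.MinGens g) (i : Fin ν) : S.IsMinGen (g i) := by
  have : g i ∈ Set.range g := ⟨i, rfl⟩
  rw [hg.2] at this; exact this

lemma g_mem (hg : S.MinGens g) (i : Fin ν) : g i ∈ S.carrier :=
  (g_mingen S hg i).1

lemma g_pos (hg : S.MinGens g) (i : Fin ν) : 0 < g i :=
  Nat.pos_of_ne_zero (g_mingen S hg i).2.1

lemma comb_mem (hg : S.MinGens g) (lam : Fin ν → ℕ) :
    (∑ i, lam i * g i) ∈ S.carrier :=
  sum_mem S _ _ fun i _ => mul_mem S _ (g_mem S hg i)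

lemma mult_mingen : S.IsMinGen S.mult := by
  refine ⟨(mult_mem S).1, (mult_mem S).2, ?_⟩
  rintro ⟨a, ha, b, hb, ha0, hb0, hab⟩
  have h1 : S.mult ≤ a := mult_le S ha ha0
  have h2 : S.mult ≤ b := mult_le S hb hb0
  omega

lemma g_eq_mult (hg : S.MinGens g) (i : Fin ν) (hi : i.val = 0) :
    g i = S.mult := by
  have : S.mult ∈ Set.range g := by rw [hg.2]; exact mult_mingen S
  obtain ⟨j, hj⟩ := this
  have h1 : g i ≤ g j := by
    rcases eq_or_lt_of_le (show i ≤ j by simp [Fin.le_def, hi]) with h | h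
    · rw [h]
    · exact le_of_lt (hg.1 h)
  have h2 : S.mult ≤ g i := mult_le S (g_mem S hg i) (g_mingen S hg i).2.1
  omega

/-- Every element of `S` is a combination of the minimal generators. -/
lemma exists_repr (hg : S.MinGens g) :
    ∀ s, s ∈ S.carrier → ∃ lam : Fin ν → ℕ, s = ∑ i, lam i * g i := by
  intro s
  induction s using Nat.strong_induction_on with
  | _ s ih =>
    intro hs
    rcases eq_or_ne s 0 with rfl | hs0
    · exact ⟨0, by simp⟩
    by_cases hmin : S.IsMinGen s
    · have : s ∈ Set.range g := by rw [hg.2]; exact hmin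
      obtain ⟨j, hj⟩ := this
      refine ⟨Pi.single j 1, ?_⟩
      rw [Finset.sum_eq_single j]
      · simp [hj]
      · intro b _ hb; simp [Pi.single_apply, hb]
      · simp
    · have : ∃ a ∈ S.carrier, ∃ b ∈ S.carrier, a ≠ 0 ∧ b ≠ 0 ∧ s = a + b := by
        by_contra h
        exact hmin ⟨hs, hs0, h⟩
      obtain ⟨a, ha, b, hb, ha0, hb0, rfl⟩ := this
      obtain ⟨la, hla⟩ := ih a (by omega) ha
      obtain ⟨lb, hlb⟩ := ih b (by omega) hb
      exact ⟨la + lb, by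
        simp only [Pi.add_apply, add_mul, Finset.sum_add_distrib, hla, hlb]⟩

/-- A bound above which everything is in `S`. -/
lemma exists_frob : ∃ F : ℕ, ∀ n, F < n → n ∈ S.carrier := by
  obtain ⟨F, hF⟩ := S.cofinite.bddAbove
  exact ⟨F, fun n hn => by
    by_contra h
    exact absurd (hF h) (by omega)⟩

end NumSgpAux

open NumSgpAux

/-- `Ap(S, m) ⊆ {Σ_{i≥2} λ_i g_i | 0 ≤ λ_i ≤ α_i}` and `m ≤ Π_{i≥2}(α_i + 1)`. -/
theorem stmt_2 (S : NumSgp) (ν : ℕ) (g : Fin ν → ℕ) (hg : S.MinGens g) :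
    S.Apery S.mult ⊆ rect g (S.alpha g) ∧ S.mult ≤ piProd (S.alpha g) := by
  classical
  set m := S.mult with hm
  obtain ⟨F, hF⟩ := exists_frob S
  -- the Apery set is bounded
  have hbdd : ∀ s ∈ S.Apery m, s ≤ F + m := by
    intro s hs
    by_contra h
    push_neg at h
    have ht : s - m ∈ S.carrier := hF _ (by omega)
    exact hs.2 ⟨s - m, ht, by omega⟩
  -- key: if s ∈ Apery and s = Σ lam i g i, then lam i * g i ∈ Apery for each i
  have hkey : ∀ s ∈ S.Apery m, ∀ lam : Fin ν → ℕ, s = ∑ i, lam i * g i →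
      ∀ i, lam i * g i ∈ S.Apery m := by
    intro s hs lam hrep i
    have hr : (∑ j ∈ Finset.univ.erase i, lam j * g j) ∈ S.carrier :=
      sum_mem S _ _ fun j _ => mul_mem S _ (g_mem S hg j)
    have hsplit : s = lam i * g i + ∑ j ∈ Finset.univ.erase i, lam j * g j := by
      rw [hrep, ← Finset.add_sum_erase _ _ (Finset.mem_univ i)]
    refine ⟨mul_mem S _ (g_mem S hg i), ?_⟩
    rintro ⟨t, ht, hteq⟩
    exact hs.2 ⟨t + ∑ j ∈ Finset.univ.erase i, lam j * g j,
      S.add_mem _ ht _ hr, by omega⟩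
  -- the alpha sets are bounded above
  have halpha_bdd : ∀ i : Fin ν, BddAbove {h : ℕ | h * g i ∈ S.Apery m} := by
    intro i
    refine ⟨F + m, fun h hh => ?_⟩
    have := hbdd _ hh
    have := g_pos S hg i
    calc h ≤ h * g i := Nat.le_mul_of_pos_right _ (g_pos S hg i)
    _ ≤ F + m := hbdd _ hh
  -- Part 1: the inclusion
  have hsub : S.Apery m ⊆ rect g (S.alpha g) := by
    intro s hs
    obtain ⟨lam, hrep⟩ := exists_repr S hg s hs.1
    refine ⟨lam, ?_, ?_, hrep⟩
    · -- lam i = 0 for i.val = 0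
      intro i hi
      by_contra h0
      have hApi := hkey s hs lam hrep i
      have hgi : g i = m := g_eq_mult S hg i hi
      refine hApi.2 ⟨(lam i - 1) * g i, mul_mem S _ (g_mem S hg i), ?_⟩
      have : lam i * g i = (lam i - 1) * g i + g i := by
        conv_lhs => rw [show lam i = (lam i - 1) + 1 by omega]
        rw [add_mul, one_mul]
      rw [this, hgi]
    · -- lam i ≤ alpha i
      intro i
      exact le_csSup (halpha_bdd i) (hkey s hs lam hrep i)
  refine ⟨hsub, ?_⟩
  -- Part 2: cardinality bound
  have hfin : (S.Apery m).Finite :=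
    Set.Finite.subset (Set.finite_Iic (F + m)) fun s hs => hbdd s hs
  set A : Finset ℕ := hfin.toFinset with hA
  have hAmem : ∀ s : ℕ, s ∈ A ↔ s ∈ S.Apery m := fun s => hfin.mem_toFinset
  -- m ≤ A.card : the minimal elements in each residue class are in Apery
  have hmpos : 0 < m := mult_pos S
  have hw : ∀ r : Fin m, ∃ s, s ∈ S.carrier ∧ s % m = r.val := by
    intro r
    refine ⟨r.val + m * (F + 1), hF _ (by nlinarith [r.isLt]), ?_⟩
    rw [Nat.add_mul_mod_self_left, Nat.mod_eq_of_lt r.isLt]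
  set w : Fin m → ℕ := fun r => sInf {s | s ∈ S.carrier ∧ s % m = r.val} with hwdef
  have hwmem : ∀ r : Fin m, w r ∈ S.carrier ∧ w r % m = r.val := fun r =>
    Nat.sInf_mem (hw r)
  have hwAp : ∀ r : Fin m, w r ∈ S.Apery m := by
    intro r
    refine ⟨(hwmem r).1, ?_⟩
    rintro ⟨t, ht, hteq⟩
    have htr : t % m = r.val := by
      have := (hwmem r).2
      rw [hteq, Nat.add_mod_right] at this
      exact this
    have : w r ≤ t := Nat.sInf_le ⟨ht, htr⟩
    omega
  have hcard1 : m ≤ A.card := by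
    have : (Finset.univ : Finset (Fin m)).card ≤ A.card := by
      apply Finset.card_le_card_of_injOn w
      · intro r _
        rw [Finset.mem_coe, hAmem]
        exact hwAp r
      · intro r1 _ r2 _ heq
        have h1 := (hwmem r1).2
        have h2 := (hwmem r2).2
        apply Fin.ext
        rw [← h1, ← h2, heq]
    simpa using this
  -- A.card ≤ piProd
  set c : Fin ν → ℕ := fun i => if i.val = 0 then 1 else S.alpha g i + 1 with hc
  set T : Finset (Fin ν → ℕ) := Fintype.piFinset fun i => Finset.range (c i) with hT
  have lamOf : ∀ s ∈ A, ∃ lam : Fin ν → ℕ, (∀ i, i.val = 0 → lam i = 0) ∧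
      (∀ i, lam i ≤ S.alpha g i) ∧ s = ∑ i, lam i * g i := by
    intro s hsA
    exact hsub (by rwa [hAmem s] at hsA)
  have hcard2 : A.card ≤ T.card := by
    set f : ℕ → (Fin ν → ℕ) := fun s =>
      if h : s ∈ rect g (S.alpha g) then h.choose else 0 with hf
    apply Finset.card_le_card_of_injOn f
    · intro s hsA
      have hsrect : s ∈ rect g (S.alpha g) :=
        hsub (by rwa [Finset.mem_coe, hAmem s] at hsA)
      have hspec := hsrect.choose_spec
      rw [hf]
      simp only [hsrect, dif_pos]
      rw [hT, Finset.mem_coe, Fintype.mem_piFinset]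
      intro i
      rw [Finset.mem_range, hc]
      by_cases hi : i.val = 0
      · simp only [hi, if_pos]
        have := hspec.1 i hi
        omega
      · simp only [hi, if_neg, if_false]
        have := hspec.2.1 i
        omega
    · intro s1 hs1 s2 hs2 heq
      have h1 : s1 ∈ rect g (S.alpha g) :=
        hsub (by rwa [Finset.mem_coe, hAmem s1] at hs1)
      have h2 : s2 ∈ rect g (S.alpha g) :=
        hsub (by rwa [Finset.mem_coe, hAmem s2] at hs2)
      rw [hf] at heq
      simp only [h1, h2, dif_pos] at heq
      rw [h1.choose_spec.2.2, h2.choose_spec.2.2, heq]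
  have hTcard : T.card = piProd (S.alpha g) := by
    rw [hT, Fintype.card_piFinset]
    simp only [Finset.card_range]
    rw [piProd]
    rw [← Finset.prod_filter_mul_prod_filter_not Finset.univ (fun i : Fin ν => i.val ≠ 0) c]
    have h1 : ∏ i ∈ Finset.univ.filter (fun i : Fin ν => i.val ≠ 0), c i
        = ∏ i ∈ Finset.univ.filter (fun i : Fin ν => i.val ≠ 0), (S.alpha g i + 1) := by
      apply Finset.prod_congr rfl
      intro i hi
      rw [Finset.mem_filter] at hi
      rw [hc]; simp [hi.2]
    have h2 : ∏ i ∈ Finset.univ.filter (fun i : Fin ν => ¬ i.val ≠ 0), c i = 1 := by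
      apply Finset.prod_eq_one
      intro i hi
      rw [Finset.mem_filter] at hi
      rw [hc]; simp [hi.2]
    rw [h1, h2, mul_one]
  omega
end

section
/- Let S be a numerical semigroup with multiplicity m, Frobenius number f, minimally generated by g_1 < ... < g_ν, and let α_i = max{h | h·g_i ∈ Ap(S,m)} for i ≥ 2. Then Ap(S,m) = {Σ_{i=2}^{ν} λ_i g_i | 0 ≤ λ_i ≤ α_i} (α-rectangularity) if and only if f + m = Σ_{i=2}^{ν} α_i g_i. -/
open NumSgp


namespace NumSgp

open Finset

variable (S : NumSgp)

lemma exists_pos_mem : ∃ s, s ∈ S.carrier ∧ s ≠ 0 := by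
  obtain ⟨B, hB⟩ := S.cofinite.bddAbove
  refine ⟨B + 1, ?_, by omega⟩
  by_contra h
  have : B + 1 ≤ B := hB h
  omega

lemma mult_spec : S.mult ∈ S.carrier ∧ S.mult ≠ 0 :=
  Nat.sInf_mem (S.exists_pos_mem)

lemma mult_le {s : ℕ} (hs : s ∈ S.carrier) (h0 : s ≠ 0) : S.mult ≤ s :=
  Nat.sInf_le ⟨hs, h0⟩

lemma nat_mul_mem {s : ℕ} (hs : s ∈ S.carrier) (n : ℕ) : n * s ∈ S.carrier := by
  induction n with
  | zero => simpa using S.zero_mem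
  | succ k ih => rw [Nat.succ_mul]; exact S.add_mem _ ih _ hs

lemma sum_mem {ι : Type*} (t : Finset ι) (f : ι → ℕ) (h : ∀ i ∈ t, f i ∈ S.carrier) :
    (∑ i ∈ t, f i) ∈ S.carrier :=
  Finset.sum_induction f (· ∈ S.carrier) (fun a b ha hb => S.add_mem a ha b hb) S.zero_mem h

variable {ν : ℕ} {g : Fin ν → ℕ}

lemma minGen_g (hg : S.MinGens g) (i : Fin ν) : S.IsMinGen (g i) := by
  have : g i ∈ Set.range g := ⟨i, rfl⟩
  rw [hg.2] at this
  exact this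

lemma g_mem (hg : S.MinGens g) (i : Fin ν) : g i ∈ S.carrier := (S.minGen_g hg i).1

lemma g_ne (hg : S.MinGens g) (i : Fin ν) : g i ≠ 0 := (S.minGen_g hg i).2.1

lemma mult_isMinGen : S.IsMinGen S.mult := by
  obtain ⟨hm, hm0⟩ := S.mult_spec
  refine ⟨hm, hm0, ?_⟩
  rintro ⟨a, ha, b, hb, ha0, hb0, hab⟩
  have h1 := S.mult_le ha ha0
  have h2 := S.mult_le hb hb0
  omega

lemma g_zero (hg : S.MinGens g) (i : Fin ν) (hi : i.val = 0) : g i = S.mult := by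
  obtain ⟨j, hj⟩ : S.mult ∈ Set.range g := by rw [hg.2]; exact S.mult_isMinGen
  have h1 : g i ≤ g j := hg.1.monotone (by simp [Fin.le_def, hi])
  have h2 := S.mult_le (S.g_mem hg i) (S.g_ne hg i)
  omega

lemma mem_rep (hg : S.MinGens g) : ∀ s, s ∈ S.carrier →
    ∃ lam : Fin ν → ℕ, s = ∑ i, lam i * g i := by
  intro s
  induction s using Nat.strong_induction_on with
  | _ s ih =>
    intro hs
    rcases eq_or_ne s 0 with rfl | hs0
    · exact ⟨0, by simp⟩
    by_cases hmin : S.IsMinGen s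
    · obtain ⟨i, rfl⟩ : s ∈ Set.range g := by rw [hg.2]; exact hmin
      refine ⟨Pi.single i 1, ?_⟩
      rw [Finset.sum_eq_single i]
      · simp
      · intro j _ hj; simp [Pi.single_apply, hj]
      · simp
    · have hex : ∃ a ∈ S.carrier, ∃ b ∈ S.carrier, a ≠ 0 ∧ b ≠ 0 ∧ s = a + b := by
        by_contra h
        exact hmin ⟨hs, hs0, h⟩
      obtain ⟨a, ha, b, hb, ha0, hb0, rfl⟩ := hex
      obtain ⟨la, hla⟩ := ih a (by omega) ha
      obtain ⟨lb, hlb⟩ := ih b (by omega) hb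
      refine ⟨la + lb, ?_⟩
      simp only [Pi.add_apply, add_mul, Finset.sum_add_distrib]
      omega

variable {f : ℤ}

lemma frob_add_nonneg (hf : S.IsFrob f) : 0 ≤ f + S.mult := by
  by_contra h
  have hm := S.mult_spec
  have : f < -1 := by omega
  obtain ⟨n, _, hn⟩ := hf.2 (-1) this
  omega

lemma apery_le (hf : S.IsFrob f) {w : ℕ} (hw : w ∈ S.Apery S.mult) :
    (w : ℤ) ≤ f + S.mult := by
  by_contra h
  obtain ⟨t, ht, htw⟩ := hf.2 ((w : ℤ) - S.mult) (by omega)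
  exact hw.2 ⟨t, ht, by omega⟩

lemma F_mem_apery (hf : S.IsFrob f) : (f + S.mult).toNat ∈ S.Apery S.mult := by
  have h0 := S.frob_add_nonneg hf
  have hF : (((f + S.mult).toNat : ℕ) : ℤ) = f + S.mult := Int.toNat_of_nonneg h0
  have hm := S.mult_spec
  constructor
  · obtain ⟨n, hn, hn2⟩ := hf.2 ((f + S.mult).toNat) (by omega)
    have : n = (f + S.mult).toNat := by omega
    rwa [this] at hn
  · rintro ⟨t, ht, hts⟩
    exact hf.1 ⟨t, ht, by omega⟩

lemma apery_divisor {s u : ℕ} (hs : s ∈ S.carrier) (hu : u ∈ S.carrier)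
    (h : s + u ∈ S.Apery S.mult) : s ∈ S.Apery S.mult := by
  refine ⟨hs, ?_⟩
  rintro ⟨t, ht, hts⟩
  exact h.2 ⟨t + u, S.add_mem t ht u hu, by omega⟩

/-- Every Apéry element has every representation with zero coefficient at index 0,
and coefficients bounded by α. -/
lemma apery_subset_rect (hg : S.MinGens g) (hf : S.IsFrob f) :
    S.Apery S.mult ⊆ rect g (S.alpha g) := by
  intro w hw
  obtain ⟨lam, hlam⟩ := S.mem_rep hg w hw.1
  have key : ∀ i : Fin ν, lam i * g i ∈ S.Apery S.mult := by
    intro i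
    have hsplit : w = lam i * g i + ∑ j ∈ Finset.univ.erase i, lam j * g j := by
      rw [hlam, ← Finset.add_sum_erase _ _ (Finset.mem_univ i)]
    have hw' := hw
    rw [hsplit] at hw'
    exact S.apery_divisor (S.nat_mul_mem (S.g_mem hg i) _)
      (S.sum_mem _ _ (fun j _ => S.nat_mul_mem (S.g_mem hg j) _)) hw' 
  have h0 : ∀ i : Fin ν, i.val = 0 → lam i = 0 := by
    intro i hi
    by_contra hne
    have := (key i).2
    apply this
    refine ⟨(lam i - 1) * g i, S.nat_mul_mem (S.g_mem hg i) _, ?_⟩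
    rw [← S.g_zero hg i hi]
    obtain ⟨k, hk⟩ := Nat.exists_eq_succ_of_ne_zero hne
    rw [hk]
    simp [Nat.succ_sub_one, Nat.succ_mul]
  refine ⟨lam, h0, ?_, hlam⟩
  intro i
  have hb : BddAbove {h : ℕ | h * g i ∈ S.Apery S.mult} := by
    refine ⟨(f + S.mult).toNat, fun h hh => ?_⟩
    have h1 := S.apery_le hf hh
    have h2 : g i ≠ 0 := S.g_ne hg i
    have h3 : h ≤ h * g i := Nat.le_mul_of_pos_right h (by omega)
    have h0' := S.frob_add_nonneg hf
    omega
  exact le_csSup hb (key i)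

lemma sum_filter_eq {lam : Fin ν → ℕ} (h0 : ∀ i : Fin ν, i.val = 0 → lam i = 0) :
    ∑ i, lam i * g i = ∑ i ∈ Finset.univ.filter (fun i : Fin ν => i.val ≠ 0), lam i * g i := by
  rw [Finset.sum_filter]
  refine Finset.sum_congr rfl (fun i _ => ?_)
  by_cases h : i.val = 0
  · simp [h, h0 i h]
  · simp [h]

end NumSgp

open Finset

/-- `Ap(S, m)` is α-rectangular iff `f + m = Σ_{i≥2} α_i g_i`. -/
theorem stmt_3 (S : NumSgp) (ν : ℕ) (g : Fin ν → ℕ) (hg : S.MinGens g)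
    (f : ℤ) (hf : S.IsFrob f) :
    S.Apery S.mult = rect g (S.alpha g) ↔
      f + (S.mult : ℤ) = ∑ i ∈ Finset.univ.filter (fun i : Fin ν => i.val ≠ 0),
        (S.alpha g i : ℤ) * (g i : ℤ) := by
  classical
  have hm := S.mult_spec
  set m := S.mult with hmdef
  set F : ℕ := (f + m).toNat with hFdef
  have h0F := S.frob_add_nonneg hf
  have hF : (F : ℤ) = f + m := Int.toNat_of_nonneg h0F
  set A : ℕ := ∑ i ∈ Finset.univ.filter (fun i : Fin ν => i.val ≠ 0), S.alpha g i * g i with hAdef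
  have hcast : (∑ i ∈ Finset.univ.filter (fun i : Fin ν => i.val ≠ 0),
      (S.alpha g i : ℤ) * (g i : ℤ)) = (A : ℤ) := by
    rw [hAdef]; push_cast; rfl
  rw [hcast]
  have hAr : A ∈ rect g (S.alpha g) := by
    refine ⟨fun i => if i.val = 0 then 0 else S.alpha g i, fun i hi => by simp [hi], ?_, ?_⟩
    · intro i; by_cases h : i.val = 0 <;> simp [h]
    · rw [NumSgp.sum_filter_eq (fun i hi => by simp [hi])]
      refine Finset.sum_congr rfl (fun i hi => ?_)
      simp only [Finset.mem_filter] at hi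
      simp [hi.2]
  constructor
  · intro hAp
    have hA_ap : A ∈ S.Apery m := by rw [hAp]; exact hAr
    have h1 : (A : ℤ) ≤ f + m := S.apery_le hf hA_ap
    have hF_ap : F ∈ S.Apery m := S.F_mem_apery hf
    have hF_r : F ∈ rect g (S.alpha g) := by rw [← hAp]; exact hF_ap
    obtain ⟨mu, hmu0, hmule, hmusum⟩ := hF_r
    have h2 : F ≤ A := by
      rw [hmusum, NumSgp.sum_filter_eq hmu0, hAdef]
      exact Finset.sum_le_sum (fun i _ => Nat.mul_le_mul_right _ (hmule i))
    omega
  · intro heq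
    have hFA : F = A := by omega
    apply Set.Subset.antisymm (S.apery_subset_rect hg hf)
    rintro s ⟨lam, hlam0, hlamle, rfl⟩
    constructor
    · exact S.sum_mem _ _ (fun i _ => S.nat_mul_mem (S.g_mem hg i) _)
    · rintro ⟨t, ht, hts⟩
      set u : ℕ := ∑ i ∈ Finset.univ.filter (fun i : Fin ν => i.val ≠ 0),
        (S.alpha g i - lam i) * g i with hudef
      have hu : u ∈ S.carrier := S.sum_mem _ _ (fun i _ => S.nat_mul_mem (S.g_mem hg i) _)
      have hsplit : A = (∑ i, lam i * g i) + u := by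
        rw [NumSgp.sum_filter_eq hlam0, hAdef, hudef, ← Finset.sum_add_distrib]
        refine Finset.sum_congr rfl (fun i _ => ?_)
        have := hlamle i
        rw [← add_mul]
        congr 1
        omega
      apply hf.1
      refine ⟨t + u, S.add_mem t ht u hu, ?_⟩
      have : (F : ℤ) = (A : ℤ) := by exact_mod_cast hFA
      push_cast
      omega
end

section
/- Let S be a numerical semigroup with multiplicity m, minimally generated by g_1 < ... < g_ν, and let α_i = max{h | h·g_i ∈ Ap(S,m)} for i ≥ 2. Then Ap(S,m) = {Σ_{i=2}^{ν} λ_i g_i | 0 ≤ λ_i ≤ α_i} if and only if m = Π_{i=2}^{ν}(α_i + 1). -/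
open NumSgp

section Aux

variable (S : NumSgp)

lemma NS_carrier_infinite : S.carrier.Infinite := by
  have h := S.cofinite.infinite_compl
  rwa [compl_compl] at h

lemma NS_mult_spec : S.mult ∈ S.carrier ∧ S.mult ≠ 0 := by
  have hne : {s | s ∈ S.carrier ∧ s ≠ 0}.Nonempty := by
    obtain ⟨x, hx, hx0⟩ := (NS_carrier_infinite S).exists_gt 0
    exact ⟨x, hx, by omega⟩
  exact Nat.sInf_mem hne

lemma NS_mult_pos : 0 < S.mult := Nat.pos_of_ne_zero (NS_mult_spec S).2

lemma NS_mult_le {s : ℕ} (hs : s ∈ S.carrier) (h0 : s ≠ 0) : S.mult ≤ s :=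
  Nat.sInf_le ⟨hs, h0⟩

lemma NS_mul_mem {s : ℕ} (hs : s ∈ S.carrier) (k : ℕ) : k * s ∈ S.carrier := by
  induction k with
  | zero => simpa using S.zero_mem
  | succ n ih =>
    have := S.add_mem _ ih _ hs
    simpa [Nat.succ_mul] using this

variable {ν : ℕ} (g : Fin ν → ℕ)

lemma NS_gen_mem (hg : S.MinGens g) (i : Fin ν) : g i ∈ S.carrier ∧ g i ≠ 0 := by
  have h : g i ∈ {s | S.IsMinGen s} := hg.2 ▸ Set.mem_range_self i
  exact ⟨h.1, h.2.1⟩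

lemma NS_sum_mem (hg : S.MinGens g) (s : Finset (Fin ν)) (lam : Fin ν → ℕ) :
    ∑ i ∈ s, lam i * g i ∈ S.carrier := by
  apply Finset.sum_induction _ (· ∈ S.carrier)
  · exact fun a b ha hb => S.add_mem a ha b hb
  · exact S.zero_mem
  · exact fun i _ => NS_mul_mem S (NS_gen_mem S g hg i).1 (lam i)

lemma NS_exists_repr (hg : S.MinGens g) :
    ∀ s, s ∈ S.carrier → ∃ lam : Fin ν → ℕ, s = ∑ i, lam i * g i := by
  intro s
  induction s using Nat.strong_induction_on with
  | _ s ih =>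
    intro hs
    by_cases h0 : s = 0
    · exact ⟨0, by simp [h0]⟩
    by_cases hmg : S.IsMinGen s
    · have hr : s ∈ Set.range g := by rw [hg.2]; exact hmg
      obtain ⟨i, hi⟩ := hr
      refine ⟨fun j => if j = i then 1 else 0, ?_⟩
      simp [ite_mul, Finset.sum_ite_eq', hi]
    · have hd : ∃ a ∈ S.carrier, ∃ b ∈ S.carrier, a ≠ 0 ∧ b ≠ 0 ∧ s = a + b := by
        by_contra hc; exact hmg ⟨hs, h0, hc⟩
      obtain ⟨a, ha, b, hb, ha0, hb0, hab⟩ := hd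
      obtain ⟨la, hla⟩ := ih a (by omega) ha
      obtain ⟨lb, hlb⟩ := ih b (by omega) hb
      refine ⟨la + lb, ?_⟩
      simp only [Pi.add_apply, add_mul, Finset.sum_add_distrib]
      omega

lemma NS_mult_isMinGen : S.IsMinGen S.mult := by
  refine ⟨(NS_mult_spec S).1, (NS_mult_spec S).2, ?_⟩
  rintro ⟨a, ha, b, hb, ha0, hb0, hab⟩
  have h1 := NS_mult_le S ha ha0
  have h2 := NS_mult_le S hb hb0
  omega

lemma NS_nu_pos (hg : S.MinGens g) : 0 < ν := by
  have h : S.mult ∈ Set.range g := by rw [hg.2]; exact NS_mult_isMinGen S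
  obtain ⟨i, -⟩ := h
  exact i.pos

lemma NS_g_zero (hg : S.MinGens g) (i : Fin ν) (hi : i.val = 0) : g i = S.mult := by
  have hm : S.mult ∈ Set.range g := by rw [hg.2]; exact NS_mult_isMinGen S
  obtain ⟨j, hj⟩ := hm
  have h1 : g i ≤ g j := hg.1.monotone (by rw [Fin.le_def]; omega)
  have h2 := NS_mult_le S (NS_gen_mem S g hg i).1 (NS_gen_mem S g hg i).2
  omega

lemma NS_apery_down {w v u : ℕ} (hw : w ∈ S.Apery S.mult) (hv : v ∈ S.carrier)
    (hu : u ∈ S.carrier) (h : w = v + u) : v ∈ S.Apery S.mult := by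
  refine ⟨hv, ?_⟩
  rintro ⟨t, ht, rfl⟩
  exact hw.2 ⟨t + u, S.add_mem _ ht _ hu, by omega⟩

noncomputable def NSW (S : NumSgp) (r : ℕ) : ℕ :=
  sInf {s | s ∈ S.carrier ∧ s % S.mult = r}

lemma NS_large_mem : ∃ N, ∀ n, N ≤ n → n ∈ S.carrier := by
  obtain ⟨N, hN⟩ := S.cofinite.bddAbove
  refine ⟨N + 1, fun n hn => ?_⟩
  by_contra h
  exact absurd (hN h) (by omega)

lemma NSW_mem {r : ℕ} (hr : r < S.mult) :
    NSW S r ∈ S.carrier ∧ NSW S r % S.mult = r := by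
  have hne : {s | s ∈ S.carrier ∧ s % S.mult = r}.Nonempty := by
    obtain ⟨N, hN⟩ := NS_large_mem S
    have hm := NS_mult_pos S
    have h1 : N + 1 ≤ S.mult * (N + 1) := Nat.le_mul_of_pos_left (N + 1) hm
    refine ⟨r + S.mult * (N + 1), hN _ (by omega), ?_⟩
    rw [Nat.add_mul_mod_self_left, Nat.mod_eq_of_lt hr]
  exact Nat.sInf_mem hne

lemma NSW_in_apery {r : ℕ} (hr : r < S.mult) : NSW S r ∈ S.Apery S.mult := by
  obtain ⟨h1, h2⟩ := NSW_mem S hr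
  refine ⟨h1, ?_⟩
  rintro ⟨t, ht, hts⟩
  have htr : t % S.mult = r := by
    have h3 : (t + S.mult) % S.mult = t % S.mult := Nat.add_mod_right t S.mult
    rw [hts, h3] at h2
    exact h2
  have hle : NSW S r ≤ t := Nat.sInf_le ⟨ht, htr⟩
  have hm := NS_mult_pos S
  omega

lemma NS_apery_elt_eq {a : ℕ} (ha : a ∈ S.Apery S.mult) :
    a % S.mult < S.mult ∧ NSW S (a % S.mult) = a := by
  have hm := NS_mult_pos S
  have hr : a % S.mult < S.mult := Nat.mod_lt _ hm
  refine ⟨hr, ?_⟩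
  set r := a % S.mult with hrdef
  have hle : NSW S r ≤ a := Nat.sInf_le ⟨ha.1, rfl⟩
  obtain ⟨h1, h2⟩ := NSW_mem S hr
  by_contra hne
  have hlt : NSW S r < a := by omega
  have hmeq : NSW S r ≡ a [MOD S.mult] := by
    unfold Nat.ModEq
    omega
  have hdvd : S.mult ∣ (a - NSW S r) := (Nat.modEq_iff_dvd' hle).mp hmeq
  obtain ⟨k, hk⟩ := hdvd
  have hk0 : k ≠ 0 := by
    rintro rfl
    simp at hk
    omega
  obtain ⟨k', rfl⟩ : ∃ k', k = k' + 1 := ⟨k - 1, by omega⟩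
  rw [Nat.mul_add, Nat.mul_one] at hk
  apply ha.2
  refine ⟨NSW S r + S.mult * k', S.add_mem _ h1 _ ?_, by omega⟩
  have hmm := NS_mul_mem S (NS_mult_spec S).1 k'
  rwa [Nat.mul_comm] at hmm

lemma NS_apery_eq : S.Apery S.mult = NSW S '' Set.Iio S.mult := by
  ext a
  constructor
  · intro ha
    obtain ⟨h1, h2⟩ := NS_apery_elt_eq S ha
    exact ⟨a % S.mult, h1, h2⟩
  · rintro ⟨r, hr, rfl⟩
    exact NSW_in_apery S hr

lemma NS_apery_finite : (S.Apery S.mult).Finite := by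
  rw [NS_apery_eq]
  exact (Set.finite_Iio _).image _

lemma NS_apery_ncard : (S.Apery S.mult).ncard = S.mult := by
  rw [NS_apery_eq]
  rw [Set.ncard_image_of_injOn]
  · rw [show Set.Iio S.mult = ↑(Finset.Iio S.mult) by simp, Set.ncard_coe_finset, Nat.card_Iio]
  · intro r1 h1 r2 h2 he
    have e1 := (NSW_mem S h1).2
    have e2 := (NSW_mem S h2).2
    rw [he] at e1
    omega

lemma NS_le_alpha (hg : S.MinGens g) (i : Fin ν) {h : ℕ}
    (hh : h * g i ∈ S.Apery S.mult) : h ≤ S.alpha g i := by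
  rw [NumSgp.alpha]
  apply le_csSup _ (show h ∈ {h | h * g i ∈ S.Apery S.mult} from hh)
  obtain ⟨N, hN⟩ := (NS_apery_finite S).bddAbove
  refine ⟨N, fun k hk => ?_⟩
  have h1 : k * g i ≤ N := hN hk
  have h2 : 0 < g i := Nat.pos_of_ne_zero (NS_gen_mem S g hg i).2
  calc k ≤ k * g i := Nat.le_mul_of_pos_right k h2
    _ ≤ N := h1

lemma NS_apery_subset_rect (hg : S.MinGens g) :
    S.Apery S.mult ⊆ rect g (S.alpha g) := by
  intro w hw
  obtain ⟨lam, hlam⟩ := NS_exists_repr S g hg w hw.1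
  have hsplit : ∀ i : Fin ν, w = lam i * g i + ∑ j ∈ Finset.univ.erase i, lam j * g j := by
    intro i
    rw [hlam, ← Finset.add_sum_erase _ _ (Finset.mem_univ i)]
  refine ⟨lam, ?_, ?_, hlam⟩
  · intro i hi
    by_contra h0
    have hgi := NS_g_zero S g hg i hi
    obtain ⟨n, hn⟩ : ∃ n, lam i = n + 1 := ⟨lam i - 1, by omega⟩
    apply hw.2
    refine ⟨n * g i + ∑ j ∈ Finset.univ.erase i, lam j * g j,
      S.add_mem _ (NS_mul_mem S (NS_gen_mem S g hg i).1 n) _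
        (NS_sum_mem S g hg _ lam), ?_⟩
    have := hsplit i
    rw [hn, Nat.succ_mul] at this
    omega
  · intro i
    apply NS_le_alpha S g hg i
    exact NS_apery_down S hw (NS_mul_mem S (NS_gen_mem S g hg i).1 _)
      (NS_sum_mem S g hg _ lam) (hsplit i)

def boxF {ν : ℕ} (c : Fin ν → ℕ) : Finset (Fin ν → ℕ) :=
  Fintype.piFinset (fun i => if i.val = 0 then {0} else Finset.range (c i + 1))

lemma mem_boxF {ν : ℕ} {c lam : Fin ν → ℕ} :
    lam ∈ boxF c ↔ (∀ i, i.val = 0 → lam i = 0) ∧ (∀ i, lam i ≤ c i) := by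
  simp only [boxF, Fintype.mem_piFinset]
  constructor
  · intro h
    constructor
    · intro i hi
      have := h i
      simpa [hi] using this
    · intro i
      have := h i
      by_cases hi : i.val = 0 <;> simp [hi] at this <;> omega
  · rintro ⟨h1, h2⟩ i
    by_cases hi : i.val = 0
    · simp [hi, h1 i hi]
    · simp only [hi, if_neg, ite_false, Finset.mem_range]
      have := h2 i
      omega

lemma boxF_card {ν : ℕ} (c : Fin ν → ℕ) : (boxF c).card = piProd c := by
  rw [boxF, Fintype.card_piFinset, piProd, Finset.prod_filter]
  apply Finset.prod_congr rfl
  intro i _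
  by_cases hi : i.val = 0 <;> simp [hi]

lemma rect_eq_image {ν : ℕ} (g c : Fin ν → ℕ) :
    rect g c = ↑((boxF c).image fun lam => ∑ i, lam i * g i) := by
  ext s
  simp only [rect, Set.mem_setOf_eq, Finset.coe_image, Set.mem_image, Finset.mem_coe, mem_boxF]
  constructor
  · rintro ⟨lam, h1, h2, rfl⟩
    exact ⟨lam, ⟨h1, h2⟩, rfl⟩
  · rintro ⟨lam, ⟨h1, h2⟩, rfl⟩
    exact ⟨lam, h1, h2, rfl⟩

lemma NS_inj_aux (hg : S.MinGens g) (hrect : S.Apery S.mult = rect g (S.alpha g))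
    {lam mu : Fin ν → ℕ}
    (hlam : lam ∈ boxF (S.alpha g)) (hmu : mu ∈ boxF (S.alpha g))
    (hsum : ∑ i, lam i * g i = ∑ i, mu i * g i)
    (j : Fin ν) (hj : lam j < mu j) : False := by
  set ka : Fin ν → ℕ := fun i => lam i - min (lam i) (mu i) with hka
  set kb : Fin ν → ℕ := fun i => mu i - min (lam i) (mu i) with hkb
  have hsum2 : ∑ i, ka i * g i = ∑ i, kb i * g i := by
    have e1 : ∑ i, lam i * g i = (∑ i, ka i * g i) + ∑ i, min (lam i) (mu i) * g i := by
      rw [← Finset.sum_add_distrib]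
      apply Finset.sum_congr rfl
      intro i _
      rw [← add_mul]
      congr 1
      simp only [hka]
      omega
    have e2 : ∑ i, mu i * g i = (∑ i, kb i * g i) + ∑ i, min (lam i) (mu i) * g i := by
      rw [← Finset.sum_add_distrib]
      apply Finset.sum_congr rfl
      intro i _
      rw [← add_mul]
      congr 1
      simp only [hkb]
      omega
    rw [e1, e2] at hsum
    omega
  have hj0 : j.val ≠ 0 := by
    intro h0
    have e1 := (mem_boxF.mp hlam).1 j h0
    have e2 := (mem_boxF.mp hmu).1 j h0
    omega
  have hjb : 0 < kb j := by simp only [hkb]; omega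
  have hja : ka j = 0 := by simp only [hka]; omega
  set A : Fin ν → ℕ := fun i => if i.val = 0 then 0 else S.alpha g i with hA
  have hkaA : ∀ i, ka i ≤ A i := by
    intro i
    by_cases hi : i.val = 0
    · have := (mem_boxF.mp hlam).1 i hi
      simp only [hA, hka, hi, if_pos]
      omega
    · have := (mem_boxF.mp hlam).2 i
      simp only [hA, hka, hi, if_neg, ite_false]
      omega
  have hMA : ∑ i, A i * g i ∈ S.Apery S.mult := by
    rw [hrect]
    refine ⟨A, fun i hi => by simp [hA, hi], fun i => ?_, rfl⟩
    by_cases hi : i.val = 0 <;> simp [hA, hi]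
  set B : Fin ν → ℕ := fun i => (A i - ka i) + kb i with hB
  have hMB : ∑ i, A i * g i = ∑ i, B i * g i := by
    calc ∑ i, A i * g i = ∑ i, ((A i - ka i) * g i + ka i * g i) := by
          apply Finset.sum_congr rfl
          intro i _
          rw [← add_mul, Nat.sub_add_cancel (hkaA i)]
      _ = (∑ i, (A i - ka i) * g i) + ∑ i, ka i * g i := Finset.sum_add_distrib
      _ = (∑ i, (A i - ka i) * g i) + ∑ i, kb i * g i := by rw [hsum2]
      _ = ∑ i, B i * g i := by
          rw [← Finset.sum_add_distrib]
          apply Finset.sum_congr rfl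
          intro i _
          rw [hB, add_mul]
  have hsplitB : ∑ i, B i * g i = B j * g j + ∑ i ∈ Finset.univ.erase j, B i * g i :=
    (Finset.add_sum_erase _ _ (Finset.mem_univ j)).symm
  have hBj : B j = (S.alpha g j + 1) + (kb j - 1) := by
    simp only [hB, hja, hA, hj0, if_neg, ite_false]
    omega
  set u : ℕ := (kb j - 1) * g j + ∑ i ∈ Finset.univ.erase j, B i * g i with hu
  have hMspl : ∑ i, A i * g i = (S.alpha g j + 1) * g j + u := by
    rw [hMB, hsplitB, hBj, add_mul, hu]
    ring
  have hu_mem : u ∈ S.carrier :=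
    S.add_mem _ (NS_mul_mem S (NS_gen_mem S g hg j).1 _) _ (NS_sum_mem S g hg _ B)
  have hv_mem : (S.alpha g j + 1) * g j ∈ S.carrier :=
    NS_mul_mem S (NS_gen_mem S g hg j).1 _
  have hv_ap := NS_apery_down S hMA hv_mem hu_mem hMspl
  have := NS_le_alpha S g hg j hv_ap
  omega

end Aux

/-- `Ap(S, m)` is α-rectangular iff `m = Π_{i≥2}(α_i + 1)`. -/
theorem stmt_4 (S : NumSgp) (ν : ℕ) (g : Fin ν → ℕ) (hg : S.MinGens g) :
    S.Apery S.mult = rect g (S.alpha g) ↔ S.mult = piProd (S.alpha g) := by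
  constructor
  · intro hrect
    have hinj : Set.InjOn (fun lam : Fin ν → ℕ => ∑ i, lam i * g i) ↑(boxF (S.alpha g)) := by
      intro lam hlam mu hmu hsum
      by_contra hne
      obtain ⟨j, hj⟩ : ∃ j, lam j ≠ mu j := Function.ne_iff.mp hne
      rcases lt_or_gt_of_ne hj with h | h
      · exact NS_inj_aux S g hg hrect (Finset.mem_coe.mp hlam) (Finset.mem_coe.mp hmu) hsum j h
      · exact NS_inj_aux S g hg hrect (Finset.mem_coe.mp hmu) (Finset.mem_coe.mp hlam) hsum.symm j h
    have h1 : S.mult = (S.Apery S.mult).ncard := (NS_apery_ncard S).symm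
    rw [h1, hrect, rect_eq_image, Set.ncard_coe_finset,
      Finset.card_image_of_injOn hinj, boxF_card]
  · intro hpi
    have hsub := NS_apery_subset_rect S g hg
    have hfin : (rect g (S.alpha g)).Finite := by
      rw [rect_eq_image]
      exact Finset.finite_toSet _
    have hcard : (rect g (S.alpha g)).ncard ≤ S.mult := by
      rw [rect_eq_image, Set.ncard_coe_finset]
      calc (Finset.image _ _).card ≤ (boxF (S.alpha g)).card := Finset.card_image_le
        _ = piProd (S.alpha g) := boxF_card _
        _ = S.mult := hpi.symm
    exact Set.eq_of_subset_of_ncard_le hsub (by rw [NS_apery_ncard]; exact hcard) hfin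
end

section
/- If a numerical semigroup S has a unique Betti element, i.e. its minimal generators are g_i = Π_{j≠i} a_j for pairwise coprime integers a_1 > a_2 > ... > a_ν > 1, then S has α-rectangular Apéry set. -/
open NumSgp

section Aux

open NumSgp

lemma aux_nsmul_mem (S : NumSgp) {x : ℕ} (hx : x ∈ S.carrier) : ∀ n : ℕ, n * x ∈ S.carrier := by
  intro n
  induction n with
  | zero => simpa using S.zero_mem
  | succ n ih =>
    have := S.add_mem _ ih _ hx
    simpa [Nat.succ_mul] using this

lemma aux_sum_mem (S : NumSgp) {ν : ℕ} (g : Fin ν → ℕ) (hg : ∀ i, g i ∈ S.carrier)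
    (lam : Fin ν → ℕ) : ∑ i, lam i * g i ∈ S.carrier := by
  classical
  refine Finset.sum_induction _ (· ∈ S.carrier) (fun p q hp hq => S.add_mem _ hp _ hq)
    S.zero_mem ?_
  intro i _
  exact aux_nsmul_mem S (hg i) (lam i)

lemma aux_exists_rep (S : NumSgp) {ν : ℕ} (g : Fin ν → ℕ)
    (hrange : Set.range g = {s | S.IsMinGen s}) :
    ∀ s, s ∈ S.carrier → ∃ lam : Fin ν → ℕ, s = ∑ i, lam i * g i := by
  classical
  intro s
  induction s using Nat.strong_induction_on with
  | _ s ih =>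
    intro hs
    rcases eq_or_ne s 0 with rfl | hs0
    · exact ⟨0, by simp⟩
    by_cases hmin : S.IsMinGen s
    · have : s ∈ Set.range g := by rw [hrange]; exact hmin
      obtain ⟨i, hi⟩ := this
      refine ⟨fun j => if j = i then 1 else 0, ?_⟩
      rw [Finset.sum_eq_single i]
      · simp [hi]
      · intro j _ hj; simp [hj]
      · intro h; exact absurd (Finset.mem_univ i) h
    · have hdec : ∃ p ∈ S.carrier, ∃ q ∈ S.carrier, p ≠ 0 ∧ q ≠ 0 ∧ s = p + q := by
        by_contra hcon
        exact hmin ⟨hs, hs0, hcon⟩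
      obtain ⟨p, hp, q, hq, hp0, hq0, hpq⟩ := hdec
      have hps : p < s := by omega
      have hqs : q < s := by omega
      obtain ⟨lp, hlp⟩ := ih p hps hp
      obtain ⟨lq, hlq⟩ := ih q hqs hq
      refine ⟨lp + lq, ?_⟩
      simp only [Pi.add_apply, add_mul, Finset.sum_add_distrib]
      omega

end Aux

/-- If `S` has a unique Betti element (minimal generators `g_i = Π_{j≠i} a_j` for
pairwise coprime `a_1 > ⋯ > a_ν > 1`), then `S` has α-rectangular Apéry set. -/
theorem stmt_9 (S : NumSgp) (ν : ℕ) (a : Fin ν → ℕ) (ha : ∀ i, 1 < a i)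
    (hanti : StrictAnti a) (hcop : ∀ i j, i ≠ j → Nat.Coprime (a i) (a j))
    (hgen : S.MinGens fun i => ∏ j ∈ Finset.univ.erase i, a j) :
    S.Apery S.mult = rect (fun i => ∏ j ∈ Finset.univ.erase i, a j)
      (S.alpha fun i => ∏ j ∈ Finset.univ.erase i, a j) := by
  classical
  set g : Fin ν → ℕ := fun i => ∏ j ∈ Finset.univ.erase i, a j with hgdef
  obtain ⟨hmono, hrange⟩ := hgen
  have hgS : ∀ i, g i ∈ S.carrier := by
    intro i
    have : g i ∈ Set.range g := ⟨i, rfl⟩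
    rw [hrange] at this; exact this.1
  have hgne : ∀ i, g i ≠ 0 := by
    intro i
    have : g i ∈ Set.range g := ⟨i, rfl⟩
    rw [hrange] at this; exact this.2.1
  -- the multiplicity is positive and in S
  have hSne : ({s | s ∈ S.carrier ∧ s ≠ 0} : Set ℕ).Nonempty := by
    obtain ⟨B, hB⟩ := S.cofinite.bddAbove
    refine ⟨B + 1, ?_, by omega⟩
    by_contra h
    have : B + 1 ≤ B := hB h
    omega
  have hm_mem : S.mult ∈ S.carrier ∧ S.mult ≠ 0 := Nat.sInf_mem hSne
  have hm_le : ∀ x ∈ S.carrier, x ≠ 0 → S.mult ≤ x := fun x hx hx0 => Nat.sInf_le ⟨hx, hx0⟩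
  have hm_min : S.IsMinGen S.mult := by
    refine ⟨hm_mem.1, hm_mem.2, ?_⟩
    rintro ⟨p, hp, q, hq, hp0, hq0, hpq⟩
    have h1 := hm_le p hp hp0
    have h2 := hm_le q hq hq0
    have := hm_mem.2
    omega
  have hν : 0 < ν := by
    have : S.mult ∈ Set.range g := by rw [hrange]; exact hm_min
    obtain ⟨i, -⟩ := this
    exact lt_of_le_of_lt (Nat.zero_le _) i.isLt
  set i0 : Fin ν := ⟨0, hν⟩ with hi0
  have hm : S.mult = g i0 := by
    have hmem : S.mult ∈ Set.range g := by rw [hrange]; exact hm_min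
    obtain ⟨j, hj⟩ := hmem
    have h1 : S.mult ≤ g i0 := hm_le _ (hgS i0) (hgne i0)
    have h2 : g i0 ≤ g j := hmono.monotone (by simp [hi0, Fin.le_def])
    omega
  set N : ℕ := ∏ j, a j with hNdef
  have hNg : ∀ i, a i * g i = N := fun i =>
    Finset.mul_prod_erase Finset.univ a (Finset.mem_univ i)
  have hdvd_g : ∀ k i : Fin ν, k ≠ i → a k ∣ g i := fun k i hki =>
    Finset.dvd_prod_of_mem a (Finset.mem_erase.mpr ⟨hki, Finset.mem_univ k⟩)
  have hdvd_N : g i0 ∣ N := ⟨a i0, by rw [← hNg i0]; ring⟩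
  have hcop_g : ∀ k : Fin ν, Nat.Coprime (a k) (g k) := fun k =>
    Nat.Coprime.prod_right fun j hj => hcop k j (Ne.symm (Finset.mem_erase.mp hj).1)
  have e1 : ∀ (x : Fin ν → ℕ) (k : Fin ν), (∑ i, x i * g i) ≡ x k * g k [MOD a k] := by
    intro x k
    have hd : a k ∣ ∑ j ∈ Finset.univ.erase k, x j * g j :=
      Finset.dvd_sum fun j hj => (hdvd_g k j (Ne.symm (Finset.mem_erase.mp hj).1)).mul_left (x j)
    have hz := Nat.modEq_zero_iff_dvd.mpr hd
    calc (∑ i, x i * g i) = x k * g k + ∑ j ∈ Finset.univ.erase k, x j * g j :=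
          (Finset.add_sum_erase _ _ (Finset.mem_univ k)).symm
      _ ≡ x k * g k + 0 [MOD a k] := Nat.ModEq.add_left _ hz
      _ = x k * g k := by ring
  -- the key minimality lemma
  have key : ∀ lam mu : Fin ν → ℕ, lam i0 = 0 → (∀ i, i ≠ i0 → lam i < a i) →
      (∑ i, mu i * g i) ≡ (∑ i, lam i * g i) [MOD g i0] → ∀ i, lam i ≤ mu i := by
    intro lam mu h0 hb hM i
    rcases eq_or_ne i i0 with rfl | hii
    · simp [h0]
    have hak : a i ∣ g i0 := hdvd_g i i0 hii
    have h2 : (∑ j, mu j * g j) ≡ (∑ j, lam j * g j) [MOD a i] := hM.of_dvd hak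
    have h3 : mu i * g i ≡ lam i * g i [MOD a i] :=
      ((e1 mu i).symm.trans h2).trans (e1 lam i)
    have h4 : mu i ≡ lam i [MOD a i] :=
      Nat.ModEq.cancel_right_of_coprime (hcop_g i) h3
    have h5 : lam i % a i = lam i := Nat.mod_eq_of_lt (hb i hii)
    calc lam i = mu i % a i := by rw [← h5]; exact h4.symm
      _ ≤ mu i := Nat.mod_le _ _
  set c : Fin ν → ℕ := fun i => a i - 1 with hc
  -- rectangle ⊆ Apery
  have hrectsub : rect g c ⊆ S.Apery S.mult := by
    rintro s ⟨lam, hl0, hlb, rfl⟩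
    have hl0' : lam i0 = 0 := hl0 i0 rfl
    have hlb' : ∀ i, i ≠ i0 → lam i < a i := by
      intro i hi
      have h1 : lam i ≤ a i - 1 := hlb i
      have h2 := ha i
      omega
    refine ⟨aux_sum_mem S g hgS lam, ?_⟩
    rintro ⟨t, ht, hst⟩
    obtain ⟨mu, rfl⟩ := aux_exists_rep S g hrange t ht
    have hMeq : (∑ i, mu i * g i) ≡ (∑ i, lam i * g i) [MOD g i0] := by
      rw [hst, hm]
      exact (Nat.add_mod_right _ _).symm
    have hall := key lam mu hl0' hlb' hMeq
    have hle : (∑ i, lam i * g i) ≤ ∑ i, mu i * g i :=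
      Finset.sum_le_sum fun i _ => Nat.mul_le_mul_right _ (hall i)
    have hg0 : 0 < g i0 := Nat.pos_of_ne_zero (hgne i0)
    rw [hm] at hst
    omega
  -- Apery ⊆ rectangle
  have hsubrect : S.Apery S.mult ⊆ rect g c := by
    rintro s ⟨hsS, hsA⟩
    obtain ⟨mu, rfl⟩ := aux_exists_rep S g hrange s hsS
    set lam : Fin ν → ℕ := fun i => if i = i0 then 0 else mu i % a i with hlam
    have hlle : ∀ i, lam i ≤ mu i := by
      intro i; rw [hlam]; dsimp only; split
      · exact Nat.zero_le _
      · exact Nat.mod_le _ _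
    have hsum : (∑ i, mu i * g i) = (∑ i, lam i * g i) + ∑ i, (mu i - lam i) * g i := by
      rw [← Finset.sum_add_distrib]
      refine Finset.sum_congr rfl fun i _ => ?_
      rw [← add_mul, Nat.add_sub_cancel' (hlle i)]
    have hdvd : g i0 ∣ ∑ i, (mu i - lam i) * g i := by
      refine Finset.dvd_sum fun i _ => ?_
      rcases eq_or_ne i i0 with rfl | hii
      · have hl0 : lam i0 = 0 := by simp [hlam]
        rw [hl0, Nat.sub_zero]
        exact Dvd.dvd.mul_left dvd_rfl _
      · have hml : mu i - lam i = a i * (mu i / a i) := by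
          have hli : lam i = mu i % a i := by rw [hlam]; simp [hii]
          have hdm := Nat.div_add_mod (mu i) (a i)
          omega
        rw [hml]
        have he : a i * (mu i / a i) * g i = (mu i / a i) * N := by
          rw [mul_comm (a i), mul_assoc, hNg i]
        rw [he]
        exact Dvd.dvd.mul_left hdvd_N _
    obtain ⟨qq, hq⟩ := hdvd
    rcases Nat.eq_zero_or_pos qq with hq0 | hq0
    · have hs_eq : (∑ i, mu i * g i) = ∑ i, lam i * g i := by
        rw [hsum, hq, hq0]; simp
      rw [hs_eq]
      refine ⟨lam, ?_, ?_, rfl⟩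
      · intro i hi
        have : i = i0 := Fin.ext (by simpa [hi0] using hi)
        rw [hlam, this]; simp
      · intro i
        rw [hlam, hc]; dsimp only; split
        · exact Nat.zero_le _
        · have h1 : mu i % a i < a i := Nat.mod_lt _ (by have := ha i; omega)
          omega
    · exfalso
      apply hsA
      refine ⟨(∑ i, lam i * g i) + (qq - 1) * g i0, ?_, ?_⟩
      · exact S.add_mem _ (aux_sum_mem S g hgS lam) _ (aux_nsmul_mem S (hgS i0) _)
      · rw [hm, hsum, hq]
        have : g i0 * qq = (qq - 1) * g i0 + g i0 := by
          rw [mul_comm]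
          calc qq * g i0 = ((qq - 1) + 1) * g i0 := by congr 1; omega
            _ = (qq - 1) * g i0 + g i0 := by rw [add_mul, one_mul]
        omega
  have hAeq : S.Apery S.mult = rect g c := Set.Subset.antisymm hsubrect hrectsub
  -- computation of alpha
  have halpha : ∀ i : Fin ν, i ≠ i0 → S.alpha g i = a i - 1 := by
    intro i hi
    have hset : {h : ℕ | h * g i ∈ S.Apery S.mult} = Set.Iic (a i - 1) := by
      ext h
      simp only [Set.mem_setOf_eq, Set.mem_Iic]
      constructor
      · intro hmem
        by_contra hcon
        push_neg at hcon
        have hhai : a i ≤ h := by have := ha i; omega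
        apply hmem.2
        have ht : (h - a i) * g i + (a i0 - 1) * g i0 ∈ S.carrier :=
          S.add_mem _ (aux_nsmul_mem S (hgS i) _) _ (aux_nsmul_mem S (hgS i0) _)
        refine ⟨_, ht, ?_⟩
        rw [hm]
        have e2 : h * g i = (h - a i) * g i + a i * g i := by
          rw [← add_mul, Nat.sub_add_cancel hhai]
        have e3 : a i * g i = a i0 * g i0 := by rw [hNg i, hNg i0]
        have e4 : a i0 * g i0 = (a i0 - 1) * g i0 + g i0 := by
          calc a i0 * g i0 = ((a i0 - 1) + 1) * g i0 := by
                congr 1; have := ha i0; omega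
            _ = (a i0 - 1) * g i0 + g i0 := by rw [add_mul, one_mul]
        omega
      · intro hh
        rw [hAeq]
        refine ⟨fun j => if j = i then h else 0, ?_, ?_, ?_⟩
        · intro j hj
          have hji : j = i0 := Fin.ext (by simpa [hi0] using hj)
          simp [hji, Ne.symm hi]
        · intro j
          rw [hc]; dsimp only; split
          · next hji => rw [hji]; exact hh
          · exact Nat.zero_le _
        · rw [Finset.sum_eq_single i]
          · simp
          · intro j _ hj; simp [hj]
          · intro hni; exact absurd (Finset.mem_univ i) hni
    simp only [NumSgp.alpha]
    rw [hset, csSup_Iic]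
  -- conclude
  rw [hAeq]
  ext s
  constructor
  · rintro ⟨lam, h0, hb, rfl⟩
    refine ⟨lam, h0, ?_, rfl⟩
    intro i
    rcases eq_or_ne i i0 with rfl | hii
    · rw [h0 i0 rfl]; exact Nat.zero_le _
    · rw [halpha i hii]; exact hb i
  · rintro ⟨lam, h0, hb, rfl⟩
    refine ⟨lam, h0, ?_, rfl⟩
    intro i
    rcases eq_or_ne i i0 with rfl | hii
    · rw [h0 i0 rfl]; exact Nat.zero_le _
    · rw [hc]; dsimp only; rw [← halpha i hii]; exact hb i
end
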